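/- For any hypergraph H, |V(H)| - b_L(H) = |V(H^*)| - b_L(H^*); equivalently, b_L(H^*) = |E(H)| - |V(H)| + b_L(H). -/

import Mathlib

open scoped Classical

section Defs

variable {V E : Type*}

/-- The set of vertices eventually burned when `B` is initially burned:
a vertex burns if it is initially burned, or if some hyperedge contains it and
all other vertices of that hyperedge are burned. -/
inductive Burns (edges : E → Finset V) (B : Set V) : V → Prop
  | init (v : V) : v ∈ B → Burns edges B v
  | spread (h : E) (v : V) : v ∈ edges h →
      (∀ u, u ∈ edges h → u ≠ v → Burns edges B u) → Burns edges B v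

/-- `B` is a lazy burning set if every vertex eventually burns. -/
def IsLazyBurningSet (edges : E → Finset V) (B : Set V) : Prop :=
  ∀ v, Burns edges B v

/-- The lazy burning number: minimum size of a lazy burning set. -/
noncomputable def lazyBurningNumber [Fintype V] (edges : E → Finset V) : ℕ :=
  sInf {n | ∃ B : Finset V, B.card = n ∧ IsLazyBurningSet edges ↑B}

/-- A `C`-matching in the incidence graph: a list of incidence pairs `(vᵢ, hᵢ)`
with the `vᵢ` distinct, such that `hᵢ` contains none of the later vertices. -/
def IsCMatching (edges : E → Finset V) (L : List (V × E)) : Prop :=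
  (∀ p ∈ L, p.1 ∈ edges p.2) ∧ (L.map Prod.fst).Nodup ∧
  ∀ i j (hi : i < L.length) (hj : j < L.length), i < j →
    (L.get ⟨j, hj⟩).1 ∉ edges (L.get ⟨i, hi⟩).2

/-- `m(H)`: maximum cardinality (length) of a `C`-matching. -/
noncomputable def maxCMatching (edges : E → Finset V) : ℕ :=
  sSup {k | ∃ L : List (V × E), IsCMatching edges L ∧ L.length = k}

/-- A chronological list of lazy burnings starting from `B0`: a list of pairs
`(hᵢ, vᵢ)` with `vᵢ ∈ hᵢ` and `hᵢ \ {vᵢ} ⊆ B_{i-1} = B0 ∪ {v₁, …, v_{i-1}}`. -/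
def IsChronList (edges : E → Finset V) (B0 : Set V) (L : List (E × V)) : Prop :=
  ∀ i (hi : i < L.length),
    (L.get ⟨i, hi⟩).2 ∈ edges (L.get ⟨i, hi⟩).1 ∧
    ∀ u, u ∈ edges (L.get ⟨i, hi⟩).1 → u ≠ (L.get ⟨i, hi⟩).2 →
      u ∈ B0 ∨ ∃ j, ∃ hj : j < L.length, j < i ∧ u = (L.get ⟨j, hj⟩).2

/-- The dual hypergraph: vertices are the hyperedges of `H`, and for each vertex
`v` of `H` there is a hyperedge `N(v) = {h : v ∈ h}`. -/
noncomputable def dualEdges [Fintype E] (edges : E → Finset V) (v : V) : Finset E :=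
  Finset.univ.filter (fun h => v ∈ edges h)

/-- `U` induces a subhypergraph all of whose hyperedges have cardinality `> 1`. -/
def GoodSet (edges : E → Finset V) (U : Finset V) : Prop :=
  ∀ h : E, ((edges h) ∩ U).Nonempty → 1 < ((edges h) ∩ U).card

/-- The vertex set of the core of `H`: the maximum induced subhypergraph all of
whose hyperedges have cardinality `> 1`. -/
noncomputable def coreSet [Fintype V] (edges : E → Finset V) : Finset V :=
  (Finset.univ : Finset V).powerset.sup (fun U => if GoodSet edges U then U else ∅)

/-- The zero forcing closure: a black vertex `u` with unique white neighbor `v`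
forces `v`. -/
inductive ZFClosure {α : Type*} (G : SimpleGraph α) (B : Set α) : α → Prop
  | init (v : α) : v ∈ B → ZFClosure G B v
  | force (u v : α) : ZFClosure G B u → G.Adj u v →
      (∀ w, G.Adj u w → w ≠ v → ZFClosure G B w) → ZFClosure G B v

def IsZeroForcingSet {α : Type*} (G : SimpleGraph α) (B : Set α) : Prop :=
  ∀ v, ZFClosure G B v

noncomputable def zeroForcingNumber {α : Type*} [Fintype α] (G : SimpleGraph α) : ℕ :=
  sInf {n | ∃ B : Finset α, B.card = n ∧ IsZeroForcingSet G ↑B}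

/-- The skew zero forcing closure: any vertex `u` (black or white) with a unique
white neighbor `v` forces `v`. -/
inductive SkewZFClosure {α : Type*} (G : SimpleGraph α) (B : Set α) : α → Prop
  | init (v : α) : v ∈ B → SkewZFClosure G B v
  | force (u v : α) : G.Adj u v →
      (∀ w, G.Adj u w → w ≠ v → SkewZFClosure G B w) → SkewZFClosure G B v

def IsSkewZeroForcingSet {α : Type*} (G : SimpleGraph α) (B : Set α) : Prop :=
  ∀ v, SkewZFClosure G B v

noncomputable def skewZeroForcingNumber {α : Type*} [Fintype α] (G : SimpleGraph α) : ℕ :=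
  sInf {n | ∃ B : Finset α, B.card = n ∧ IsSkewZeroForcingSet G ↑B}

/-- The incidence (Levi) graph of a hypergraph. -/
def incidenceGraph (edges : E → Finset V) : SimpleGraph (V ⊕ E) where
  Adj x y := (∃ v h, x = Sum.inl v ∧ y = Sum.inr h ∧ v ∈ edges h) ∨
             (∃ v h, x = Sum.inr h ∧ y = Sum.inl v ∧ v ∈ edges h)
  symm := by
    constructor
    rintro x y (⟨v, h, rfl, rfl, hm⟩ | ⟨v, h, rfl, rfl, hm⟩)
    · exact Or.inr ⟨v, h, rfl, rfl, hm⟩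
    · exact Or.inl ⟨v, h, rfl, rfl, hm⟩
  loopless := by
    constructor
    rintro x (⟨v, h, h1, h2, _⟩ | ⟨v, h, h1, h2, _⟩) <;> subst h1 <;> simp_all

/-- The star `K_{1,j}` with center `0`. -/
def starGraph (j : ℕ) : SimpleGraph (Fin (j + 1)) where
  Adj a b := a ≠ b ∧ (a = 0 ∨ b = 0)
  symm := ⟨fun _ _ ⟨hne, hor⟩ => ⟨hne.symm, hor.symm⟩⟩
  loopless := ⟨fun _ ha => ha.1 rfl⟩

end Defs

section Aux

variable {V E : Type*}

lemma burns_mono (edges : E → Finset V) {B B' : Set V} (hBB : B ⊆ B') {v : V}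
    (hv : Burns edges B v) : Burns edges B' v := by
  induction hv with
  | init v hv => exact .init v (hBB hv)
  | spread h v hm _ ih => exact .spread h v hm ih

lemma exists_first_step (edges : E → Finset V) (S : Finset V) {v : V}
    (hv : Burns edges ↑S v) :
    v ∉ S → ∃ w h, w ∉ S ∧ w ∈ edges h ∧ ∀ u ∈ edges h, u ≠ w → u ∈ S := by
  induction hv with
  | init v hv => intro hvS; exact absurd hv hvS
  | spread h v hm hb ih =>
    intro hvS
    by_cases hall : ∀ u ∈ edges h, u ≠ v → u ∈ S
    · exact ⟨v, h, hvS, hm, hall⟩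
    · push_neg at hall
      obtain ⟨u, hu, hne, huS⟩ := hall
      exact ih u hu hne huS

lemma nil_matching (edges : E → Finset V) : IsCMatching edges ([] : List (V × E)) := by
  refine ⟨by simp, by simp, ?_⟩
  intro i j hi hj _
  simp at hi

lemma exists_matching [Fintype V] (edges : E → Finset V) :
    ∀ n (S : Finset V), (Finset.univ \ S).card = n →
    (∀ v, Burns edges ↑S v) →
    ∃ L : List (V × E), IsCMatching edges L ∧
      (L.map Prod.fst).toFinset = Finset.univ \ S ∧ L.length = n := by
  intro n
  induction n using Nat.strong_induction_on with
  | _ n ih =>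
    intro S hcard hburn
    rcases Nat.eq_zero_or_pos n with hn | hn
    · subst hn
      refine ⟨[], nil_matching edges, ?_, rfl⟩
      simp [Finset.card_eq_zero.mp hcard]
    · have hne : (Finset.univ \ S).Nonempty := Finset.card_pos.mp (hcard ▸ hn)
      obtain ⟨v, hv⟩ := hne
      have hvS : v ∉ S := (Finset.mem_sdiff.mp hv).2
      obtain ⟨w, h, hwS, hwh, hsub⟩ := exists_first_step edges S (hburn v) hvS
      set S' : Finset V := insert w S with hS'
      have hSS' : (S : Set V) ⊆ ↑S' := by
        intro x hx; simp only [hS', Finset.coe_insert, Set.mem_insert_iff]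
        exact Or.inr hx
      have hburn' : ∀ u, Burns edges ↑S' u := fun u => burns_mono edges hSS' (hburn u)
      have hcard' : (Finset.univ \ S').card = n - 1 := by
        have : Finset.univ \ S' = (Finset.univ \ S).erase w := by
          ext x
          simp only [hS', Finset.mem_sdiff, Finset.mem_insert, Finset.mem_erase,
            Finset.mem_univ, true_and]
          tauto
        rw [this, Finset.card_erase_of_mem (Finset.mem_sdiff.mpr ⟨Finset.mem_univ w, hwS⟩),
          hcard]
      obtain ⟨L', hL', hset', hlen'⟩ := ih (n - 1) (by omega) S' hcard' hburn'
      obtain ⟨hL1, hL2, hL3⟩ := hL'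
      have hnotmemS' : ∀ p ∈ L', p.1 ∉ S' := by
        intro p hp
        have : p.1 ∈ (L'.map Prod.fst).toFinset := by
          simp only [List.mem_toFinset, List.mem_map]
          exact ⟨p, hp, rfl⟩
        rw [hset'] at this
        exact (Finset.mem_sdiff.mp this).2
      refine ⟨(w, h) :: L', ⟨?_, ?_, ?_⟩, ?_, by simp [hlen']; omega⟩
      · rintro p hp
        rcases List.mem_cons.mp hp with rfl | hp
        · exact hwh
        · exact hL1 p hp
      · simp only [List.map_cons, List.nodup_cons]
        refine ⟨?_, hL2⟩
        intro hw
        obtain ⟨p, hp, hpw⟩ := List.mem_map.mp hw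
        exact hnotmemS' p hp (hpw ▸ Finset.mem_insert_self w S)
      · intro i j hi hj hij
        match i, j with
        | 0, (j + 1) =>
          have hj' : j < L'.length := by simpa using hj
          simp only [List.get_cons_succ, List.get_cons_zero]
          intro hmem
          have h1 : (L'.get ⟨j, hj'⟩).1 ∉ S' := hnotmemS' _ (L'.get_mem _)
          have h2 : (L'.get ⟨j, hj'⟩).1 ∉ S := fun hx => h1 (Finset.mem_insert_of_mem hx)
          have h3 : (L'.get ⟨j, hj'⟩).1 ≠ w := fun hx => h1 (hx ▸ Finset.mem_insert_self w S)
          exact h2 (hsub _ hmem h3)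
        | (i + 1), (j + 1) =>
          have hi' : i < L'.length := by simpa using hi
          have hj' : j < L'.length := by simpa using hj
          simp only [List.get_cons_succ]
          exact hL3 i j hi' hj' (by omega)
      · rw [List.map_cons, List.toFinset_cons, hset', hS']
        ext x
        simp only [Finset.mem_insert, Finset.mem_sdiff, Finset.mem_univ, true_and]
        by_cases hx : x = w
        · subst hx; simp [hwS]
        · simp [hx]

lemma matching_burns [Fintype V] (edges : E → Finset V) (L : List (V × E))
    (hL : IsCMatching edges L) :
    IsLazyBurningSet edges ↑(Finset.univ \ (L.map Prod.fst).toFinset) := by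
  obtain ⟨hL1, hL2, hL3⟩ := hL
  set B : Finset V := Finset.univ \ (L.map Prod.fst).toFinset with hB
  have key : ∀ i (hi : i < L.length), Burns edges ↑B (L.get ⟨i, hi⟩).1 := by
    intro i
    induction i using Nat.strong_induction_on with
    | _ i ih =>
      intro hi
      refine Burns.spread (L.get ⟨i, hi⟩).2 (L.get ⟨i, hi⟩).1
        (hL1 _ (L.get_mem _)) ?_
      intro u hu hne
      by_cases huB : u ∈ B
      · exact Burns.init u huB
      · have : u ∈ (L.map Prod.fst).toFinset := by
          by_contra hc
          exact huB (Finset.mem_sdiff.mpr ⟨Finset.mem_univ u, hc⟩)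
        simp only [List.mem_toFinset, List.mem_map] at this
        obtain ⟨p, hp, hpu⟩ := this
        obtain ⟨⟨j, hj⟩, hjp⟩ := List.mem_iff_get.mp hp
        rcases lt_trichotomy j i with hji | hji | hji
        · have := ih j hji hj
          rwa [hjp, hpu] at this
        · exact absurd (by subst hji; rw [← hpu, ← hjp]) hne
        · exact absurd (by rwa [← hpu, ← hjp] at hu) (hL3 i j hi hj hji)
  intro v
  by_cases hvB : v ∈ B
  · exact Burns.init v hvB
  · have : v ∈ (L.map Prod.fst).toFinset := by
      by_contra hc
      exact hvB (Finset.mem_sdiff.mpr ⟨Finset.mem_univ v, hc⟩)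
    simp only [List.mem_toFinset, List.mem_map] at this
    obtain ⟨p, hp, hpv⟩ := this
    obtain ⟨⟨j, hj⟩, hjp⟩ := List.mem_iff_get.mp hp
    have := key j hj
    rwa [hjp, hpv] at this

lemma matching_length_le [Fintype V] (edges : E → Finset V) (L : List (V × E))
    (hL : IsCMatching edges L) : L.length ≤ Fintype.card V := by
  obtain ⟨_, hL2, _⟩ := hL
  calc L.length = (L.map Prod.fst).length := by simp
    _ = (L.map Prod.fst).toFinset.card := (List.toFinset_card_of_nodup hL2).symm
    _ ≤ Fintype.card V := Finset.card_le_univ _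

lemma lbn_add_max [Fintype V] (edges : E → Finset V) :
    lazyBurningNumber edges + maxCMatching edges = Fintype.card V := by
  set m := maxCMatching edges with hm
  set Sm : Set ℕ := {k | ∃ L : List (V × E), IsCMatching edges L ∧ L.length = k} with hSm
  have hSm_ne : Sm.Nonempty := ⟨0, [], nil_matching edges, rfl⟩
  have hSm_bdd : BddAbove Sm := by
    refine ⟨Fintype.card V, ?_⟩
    rintro k ⟨L, hL, rfl⟩
    exact matching_length_le edges L hL
  have hm_mem : m ∈ Sm := Nat.sSup_mem hSm_ne hSm_bdd
  obtain ⟨Lmax, hLmax, hLmaxlen⟩ := hm_mem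
  set Sb : Set ℕ := {n | ∃ B : Finset V, B.card = n ∧ IsLazyBurningSet edges ↑B} with hSb
  have hSb_ne : Sb.Nonempty := by
    refine ⟨Fintype.card V, Finset.univ, rfl, ?_⟩
    intro v
    exact Burns.init v (by simp)
  have hb_mem : lazyBurningNumber edges ∈ Sb := Nat.sInf_mem hSb_ne
  obtain ⟨B, hBcard, hBburn⟩ := hb_mem
  -- lbn ≤ card V - m
  have h1 : lazyBurningNumber edges ≤ Fintype.card V - m := by
    apply Nat.sInf_le
    refine ⟨Finset.univ \ (Lmax.map Prod.fst).toFinset, ?_, matching_burns edges Lmax hLmax⟩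
    rw [Finset.card_sdiff_of_subset (Finset.subset_univ _), Finset.card_univ,
      List.toFinset_card_of_nodup hLmax.2.1]
    simp [hLmaxlen]
  -- m ≥ card V - lbn
  have h2 : Fintype.card V - lazyBurningNumber edges ≤ m := by
    obtain ⟨L, hL, _, hlen⟩ := exists_matching edges ((Finset.univ \ B).card) B rfl hBburn
    have : L.length ∈ Sm := ⟨L, hL, rfl⟩
    have hle : L.length ≤ m := le_csSup hSm_bdd this
    rw [hlen, Finset.card_sdiff_of_subset (Finset.subset_univ _), Finset.card_univ, hBcard] at hle
    exact hle
  have h3 : m ≤ Fintype.card V := by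
    rw [← hLmaxlen]; exact matching_length_le edges Lmax hLmax
  have h4 : lazyBurningNumber edges ≤ Fintype.card V := hBcard ▸ Finset.card_le_univ B
  omega

lemma matching_swap (edges : E → Finset V) (edges' : V → Finset E)
    (hdual : ∀ v h, v ∈ edges h ↔ h ∈ edges' v)
    (L : List (V × E)) (hL : IsCMatching edges L) :
    IsCMatching edges' (L.reverse.map Prod.swap) := by
  obtain ⟨hL1, hL2, hL3⟩ := hL
  have hget : ∀ (a : ℕ) (ha : a < (L.reverse.map Prod.swap).length),
      ∃ (hb : L.length - 1 - a < L.length),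
        (L.reverse.map Prod.swap).get ⟨a, ha⟩ = Prod.swap (L.get ⟨L.length - 1 - a, hb⟩) := by
    intro a ha
    have ha' : a < L.reverse.length := by simpa using ha
    have hb : L.length - 1 - a < L.length := by
      simp only [List.length_map, List.length_reverse] at ha
      omega
    refine ⟨hb, ?_⟩
    simp only [List.get_eq_getElem, List.getElem_map, List.getElem_reverse]
  refine ⟨?_, ?_, ?_⟩
  · rintro p hp
    simp only [List.mem_map, List.mem_reverse] at hp
    obtain ⟨q, hq, rfl⟩ := hp
    exact (hdual q.1 q.2).mp (hL1 q hq)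
  · -- snd components of L are nodup
    rw [List.nodup_iff_injective_get]
    rintro ⟨a, ha⟩ ⟨b, hb⟩ hab
    have hma : a < (L.reverse.map Prod.swap).length := by simpa using ha
    have hmb : b < (L.reverse.map Prod.swap).length := by simpa using hb
    have ga : ((L.reverse.map Prod.swap).map Prod.fst).get ⟨a, ha⟩
        = ((L.reverse.map Prod.swap).get ⟨a, hma⟩).1 := by simp only [List.get_eq_getElem, List.getElem_map]
    have gb : ((L.reverse.map Prod.swap).map Prod.fst).get ⟨b, hb⟩
        = ((L.reverse.map Prod.swap).get ⟨b, hmb⟩).1 := by simp only [List.get_eq_getElem, List.getElem_map]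
    obtain ⟨ha2, hea⟩ := hget a hma
    obtain ⟨hb2, heb⟩ := hget b hmb
    rw [ga, gb, hea, heb] at hab
    simp only [Prod.fst_swap] at hab
    -- hab : (L.get ⟨L.length-1-a, _⟩).2 = (L.get ⟨L.length-1-b, _⟩).2
    by_contra hne
    have hne' : a ≠ b := fun h => hne (by simp [h])
    have haL : a < L.length := by simpa using ha
    have hbL : b < L.length := by simpa using hb
    have key : ∀ i j (hi : i < L.length) (hj : j < L.length), i < j →
        (L.get ⟨i, hi⟩).2 ≠ (L.get ⟨j, hj⟩).2 := by
      intro i j hi hj hij heq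
      have : (L.get ⟨j, hj⟩).1 ∈ edges (L.get ⟨j, hj⟩).2 := hL1 _ (L.get_mem _)
      rw [← heq] at this
      exact hL3 i j hi hj hij this
    rcases lt_trichotomy (L.length - 1 - a) (L.length - 1 - b) with h | h | h
    · exact key _ _ ha2 hb2 h hab
    · exact hne' (by omega)
    · exact key _ _ hb2 ha2 h hab.symm
  · intro a b hma hmb hab
    obtain ⟨ha2, hea⟩ := hget a hma
    obtain ⟨hb2, heb⟩ := hget b hmb
    rw [hea, heb]
    simp only [Prod.fst_swap, Prod.snd_swap]
    intro hmem
    have hba : L.length - 1 - b < L.length - 1 - a := by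
      simp only [List.length_map, List.length_reverse] at hmb
      omega
    exact hL3 _ _ hb2 ha2 hba ((hdual _ _).mpr hmem)

lemma mem_dualEdges [Fintype E] (edges : E → Finset V) (v : V) (h : E) :
    h ∈ dualEdges edges v ↔ v ∈ edges h := by
  simp [dualEdges]

lemma max_dual [Fintype E] (edges : E → Finset V) :
    maxCMatching (dualEdges edges) = maxCMatching edges := by
  have hset : {k | ∃ L : List (E × V), IsCMatching (dualEdges edges) L ∧ L.length = k}
      = {k | ∃ L : List (V × E), IsCMatching edges L ∧ L.length = k} := by
    ext k
    constructor
    · rintro ⟨L, hL, rfl⟩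
      refine ⟨L.reverse.map Prod.swap, ?_, by simp⟩
      exact matching_swap (dualEdges edges) edges
        (fun h v => mem_dualEdges edges v h) L hL
    · rintro ⟨L, hL, rfl⟩
      refine ⟨L.reverse.map Prod.swap, ?_, by simp⟩
      exact matching_swap edges (dualEdges edges)
        (fun v h => (mem_dualEdges edges v h).symm) L hL
  unfold maxCMatching
  rw [hset]

end Aux

theorem stmt5 {V E : Type*} [Fintype V] [Fintype E] (edges : E → Finset V) :
    (Fintype.card V : ℤ) - lazyBurningNumber edges =
        (Fintype.card E : ℤ) - lazyBurningNumber (dualEdges edges) ∧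
    (lazyBurningNumber (dualEdges edges) : ℤ) =
        (Fintype.card E : ℤ) - Fintype.card V + lazyBurningNumber edges := by
  have h1 := lbn_add_max edges
  have h2 := lbn_add_max (dualEdges edges)
  have h3 := max_dual edges
  constructor <;> omega
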